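/- Let B be a commutative ring, let H be a commutative Hopf algebra over B, and for every commutative B-algebra C let G(C) denote the group (under convolution) of B-algebra homomorphisms H → C. Let f ∈ H, and let U be the principal open subset of G defined by f, so that U(C) = {φ ∈ G(C) : φ(f) ∈ C^×} is the set of B-algebra homomorphisms H_f → C. Then the natural map U(B)/R → G(B)/R is injective: if φ₀, φ₁ ∈ U(B) are R-equivalent in G(B), then they are directly R-equivalent in U(B), i.e. there exists a B-algebra homomorphism φ : H → B[t]_Σ with φ(f) ∈ (B[t]_Σ)^×, ev₀ ∘ φ = φ₀ and ev₁ ∘ φ = φ₁. -/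

import Mathlib

/-!
STATEMENT 13: Let `B` be a commutative ring, `H` a commutative Hopf algebra over `B`,
and `G(C)` the group of `B`-algebra homomorphisms `H → C` (under convolution).
Let `f ∈ H` and let `U` be the principal open subset of `G` defined by `f`, so that
`U(C) = {φ ∈ G(C) : φ(f) ∈ C^×}`.  Then the natural map `U(B)/R → G(B)/R` is injective:
if `φ₀, φ₁ ∈ U(B)` are R-equivalent in `G(B)` then they are directly R-equivalent in
`U(B)`, i.e. there is a `B`-algebra homomorphism `φ : H → B[t]_Σ` with
`φ(f) ∈ (B[t]_Σ)^×`, `ev₀ ∘ φ = φ₀` and `ev₁ ∘ φ = φ₁`.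
-/

noncomputable section

open Polynomial

/-- The multiplicative subset `Σ` of `B[t]` consisting of the polynomials whose values
at `t = 0` and `t = 1` are units of `B`. -/
def RSigma (B : Type*) [CommRing B] : Submonoid (Polynomial B) where
  carrier := {P | IsUnit (P.eval 0) ∧ IsUnit (P.eval 1)}
  mul_mem' := fun ha hb =>
    ⟨by rw [eval_mul]; exact ha.1.mul hb.1, by rw [eval_mul]; exact ha.2.mul hb.2⟩
  one_mem' := ⟨by simp, by simp⟩

theorem mem_RSigma {B : Type*} [CommRing B] {P : Polynomial B} :
    P ∈ RSigma B ↔ IsUnit (P.eval 0) ∧ IsUnit (P.eval 1) := Iff.rfl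

/-- The localization `B[t]_Σ` of `B[t]` at `Σ`. -/
abbrev RLoc (B : Type*) [CommRing B] := Localization (RSigma B)

/-- Evaluation at `t = 0`, extended to `B[t]_Σ`, as a `B`-algebra homomorphism. -/
def ev0 (B : Type*) [CommRing B] : RLoc B →ₐ[B] B :=
  IsLocalization.liftAlgHom (M := RSigma B) (f := Polynomial.aeval (0 : B))
    (fun y => by simpa using (mem_RSigma.mp y.2).1)

/-- Evaluation at `t = 1`, extended to `B[t]_Σ`, as a `B`-algebra homomorphism. -/
def ev1 (B : Type*) [CommRing B] : RLoc B →ₐ[B] B :=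
  IsLocalization.liftAlgHom (M := RSigma B) (f := Polynomial.aeval (1 : B))
    (fun y => by simpa using (mem_RSigma.mp y.2).2)

/-- Direct R-equivalence of two -points of the affine group scheme . -/
def DirectlyREquivPoints (B : Type*) [CommRing B] (H : Type*) [CommRing H] [Algebra B H]
    (ψ₀ ψ₁ : H →ₐ[B] B) : Prop :=
  ∃ φ : H →ₐ[B] RLoc B, (ev0 B).comp φ = ψ₀ ∧ (ev1 B).comp φ = ψ₁


set_option maxHeartbeats 1000000

open TensorProduct LinearMap Coalgebra in
section
open TensorProduct LinearMap Coalgebra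


open TensorProduct LinearMap Coalgebra

section LinearConv

variable {B : Type*} [CommRing B]
variable {C : Type*} [AddCommMonoid C] [Module B C] [CoalgebraStruct B C]
variable {L : Type*} [CommRing L] [Algebra B L]

/-- Convolution of linear maps from a coalgebra to an algebra. -/
noncomputable def lconv (f g : C →ₗ[B] L) : C →ₗ[B] L :=
  LinearMap.mul' B L ∘ₗ TensorProduct.map f g ∘ₗ Coalgebra.comul

/-- The convolution unit. -/
noncomputable def lone : C →ₗ[B] L := Algebra.linearMap B L ∘ₗ Coalgebra.counit

lemma lconv_apply (f g : C →ₗ[B] L) (a : C) :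
    lconv f g a = LinearMap.mul' B L (TensorProduct.map f g (Coalgebra.comul a)) := rfl

lemma lone_apply (a : C) : (lone : C →ₗ[B] L) a = algebraMap B L (Coalgebra.counit a) := rfl

end LinearConv

section LinearConvLaws

variable {B : Type*} [CommRing B]
variable {C : Type*} [AddCommMonoid C] [Module B C] [Coalgebra B C]
variable {L : Type*} [CommRing L] [Algebra B L]

lemma lconv_lone (f : C →ₗ[B] L) : lconv f lone = f := by
  ext a
  set r := Coalgebra.Repr.arbitrary B a with hr
  rw [lconv_apply, ← r.eq]
  have key : ∑ i ∈ r.index, (Coalgebra.counit (R := B) (r.right i)) • r.left i = a := by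
    have h2 := congrArg (TensorProduct.rid B C) (Coalgebra.sum_tmul_counit_eq r)
    rw [map_sum] at h2
    simp only [TensorProduct.rid_tmul, one_smul] at h2
    exact h2
  calc LinearMap.mul' B L (TensorProduct.map f lone (∑ i ∈ r.index, r.left i ⊗ₜ[B] r.right i))
      = ∑ i ∈ r.index, f (r.left i) * algebraMap B L (Coalgebra.counit (r.right i)) := by
        simp [map_sum, lone]
    _ = ∑ i ∈ r.index, f ((Coalgebra.counit (R := B) (r.right i)) • r.left i) := by
        refine Finset.sum_congr rfl fun i _ => ?_
        rw [map_smul, Algebra.smul_def, mul_comm]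
    _ = f a := by rw [← map_sum, key]

lemma lone_lconv (f : C →ₗ[B] L) : lconv lone f = f := by
  ext a
  set r := Coalgebra.Repr.arbitrary B a with hr
  rw [lconv_apply, ← r.eq]
  have key : ∑ i ∈ r.index, (Coalgebra.counit (R := B) (r.left i)) • r.right i = a := by
    have h2 := congrArg (TensorProduct.lid B C) (Coalgebra.sum_counit_tmul_eq r)
    rw [map_sum] at h2
    simp only [TensorProduct.lid_tmul, one_smul] at h2
    exact h2
  calc LinearMap.mul' B L (TensorProduct.map lone f (∑ i ∈ r.index, r.left i ⊗ₜ[B] r.right i))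
      = ∑ i ∈ r.index, algebraMap B L (Coalgebra.counit (r.left i)) * f (r.right i) := by
        simp [map_sum, lone]
    _ = ∑ i ∈ r.index, f ((Coalgebra.counit (R := B) (r.left i)) • r.right i) := by
        refine Finset.sum_congr rfl fun i _ => ?_
        rw [map_smul, Algebra.smul_def]
    _ = f a := by rw [← map_sum, key]

lemma lconv_assoc (f g h : C →ₗ[B] L) :
    lconv (lconv f g) h = lconv f (lconv g h) := by
  have E1 : TensorProduct.map (lconv f g) h =
      (LinearMap.mul' B L).rTensor L ∘ₗ TensorProduct.map (TensorProduct.map f g) h ∘ₗ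
        (Coalgebra.comul (R := B) (A := C)).rTensor C := by
    ext x y
    simp [lconv_apply]
  have E1' : TensorProduct.map f (lconv g h) =
      (LinearMap.mul' B L).lTensor L ∘ₗ TensorProduct.map f (TensorProduct.map g h) ∘ₗ
        (Coalgebra.comul (R := B) (A := C)).lTensor C := by
    ext x y
    simp [lconv_apply]
  have E2 : TensorProduct.map (TensorProduct.map f g) h ∘ₗ
        (TensorProduct.assoc B C C C).symm.toLinearMap =
      (TensorProduct.assoc B L L L).symm.toLinearMap ∘ₗ
        TensorProduct.map f (TensorProduct.map g h) := by
    ext x y z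
    simp
  have E3 : LinearMap.mul' B L ∘ₗ (LinearMap.mul' B L).rTensor L ∘ₗ
        (TensorProduct.assoc B L L L).symm.toLinearMap =
      LinearMap.mul' B L ∘ₗ (LinearMap.mul' B L).lTensor L := by
    ext x y z
    simp [mul_assoc]
  ext a
  have c1 : (Coalgebra.comul (R := B) (A := C)).rTensor C (Coalgebra.comul a) =
      (TensorProduct.assoc B C C C).symm
        ((Coalgebra.comul (R := B) (A := C)).lTensor C (Coalgebra.comul a)) :=
    (Coalgebra.coassoc_symm_apply a).symm
  calc lconv (lconv f g) h a
      = LinearMap.mul' B L (TensorProduct.map (lconv f g) h (Coalgebra.comul a)) := rfl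
    _ = LinearMap.mul' B L ((LinearMap.mul' B L).rTensor L
          (TensorProduct.map (TensorProduct.map f g) h
            ((Coalgebra.comul (R := B) (A := C)).rTensor C (Coalgebra.comul a)))) := by
        rw [E1]; rfl
    _ = LinearMap.mul' B L ((LinearMap.mul' B L).rTensor L
          ((TensorProduct.assoc B L L L).symm
            (TensorProduct.map f (TensorProduct.map g h)
              ((Coalgebra.comul (R := B) (A := C)).lTensor C (Coalgebra.comul a))))) := by
        rw [c1]
        exact congrArg _ (congrArg _ (LinearMap.congr_fun E2 _))
    _ = LinearMap.mul' B L ((LinearMap.mul' B L).lTensor L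
          (TensorProduct.map f (TensorProduct.map g h)
            ((Coalgebra.comul (R := B) (A := C)).lTensor C (Coalgebra.comul a)))) :=
        LinearMap.congr_fun E3 _
    _ = lconv f (lconv g h) a := by
        rw [lconv_apply, E1']; rfl

lemma algHom_comp_lconv {L' : Type*} [CommRing L'] [Algebra B L'] (θ : L →ₐ[B] L')
    (f g : C →ₗ[B] L) :
    θ.toLinearMap ∘ₗ lconv f g = lconv (θ.toLinearMap ∘ₗ f) (θ.toLinearMap ∘ₗ g) := by
  have E : θ.toLinearMap ∘ₗ LinearMap.mul' B L ∘ₗ TensorProduct.map f g =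
      LinearMap.mul' B L' ∘ₗ TensorProduct.map (θ.toLinearMap ∘ₗ f) (θ.toLinearMap ∘ₗ g) := by
    ext x y
    simp
  ext a
  simpa [lconv_apply] using LinearMap.congr_fun E (Coalgebra.comul a)

end LinearConvLaws
open TensorProduct LinearMap Coalgebra

section TensorCoalg

variable {B : Type*} [CommRing B]
variable {M N : Type*} [AddCommMonoid M] [AddCommMonoid N] [Module B M] [Module B N]
  [Coalgebra B M] [Coalgebra B N]

/-- The tensor product of two coalgebras is a coalgebra (universe-polymorphic version,
not an instance). -/
noncomputable def tensorCoalgebra : Coalgebra B (M ⊗[B] N) where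
  __ := (inferInstance : CoalgebraStruct B (M ⊗[B] N))
  coassoc := by
    set ttt := (TensorProduct.tensorTensorTensorComm B M M N N).toLinearMap with httt
    have hcm : (Coalgebra.comul (R := B) (A := M ⊗[B] N)) =
        ttt ∘ₗ TensorProduct.map (Coalgebra.comul (R := B) (A := M))
          (Coalgebra.comul (R := B) (A := N)) := rfl
    set σL : ((M ⊗[B] M) ⊗[B] M) ⊗[B] ((N ⊗[B] N) ⊗[B] N) →ₗ[B]
        (M ⊗[B] N) ⊗[B] ((M ⊗[B] N) ⊗[B] (M ⊗[B] N)) :=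
      (TensorProduct.assoc B (M ⊗[B] N) (M ⊗[B] N) (M ⊗[B] N)).toLinearMap ∘ₗ
        (TensorProduct.map ttt LinearMap.id) ∘ₗ
        (TensorProduct.tensorTensorTensorComm B (M ⊗[B] M) M (N ⊗[B] N) N).toLinearMap with hσL
    set σR : (M ⊗[B] (M ⊗[B] M)) ⊗[B] (N ⊗[B] (N ⊗[B] N)) →ₗ[B]
        (M ⊗[B] N) ⊗[B] ((M ⊗[B] N) ⊗[B] (M ⊗[B] N)) :=
      (TensorProduct.map LinearMap.id ttt) ∘ₗ
        (TensorProduct.tensorTensorTensorComm B M (M ⊗[B] M) N (N ⊗[B] N)).toLinearMap with hσR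
    have C1 : (TensorProduct.assoc B (M ⊗[B] N) (M ⊗[B] N) (M ⊗[B] N)).toLinearMap ∘ₗ
          (Coalgebra.comul (R := B) (A := M ⊗[B] N)).rTensor (M ⊗[B] N) ∘ₗ ttt =
        σL ∘ₗ TensorProduct.map
          ((Coalgebra.comul (R := B) (A := M)).rTensor M)
          ((Coalgebra.comul (R := B) (A := N)).rTensor N) := by
      ext a b c d
      simp [hcm, httt, hσL]
    have C2 : (Coalgebra.comul (R := B) (A := M ⊗[B] N)).lTensor (M ⊗[B] N) ∘ₗ ttt =
        σR ∘ₗ TensorProduct.map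
          ((Coalgebra.comul (R := B) (A := M)).lTensor M)
          ((Coalgebra.comul (R := B) (A := N)).lTensor N) := by
      ext a b c d
      simp [hcm, httt, hσR]
    have C3 : σL = σR ∘ₗ TensorProduct.map
        (TensorProduct.assoc B M M M).toLinearMap
        (TensorProduct.assoc B N N N).toLinearMap := by
      ext a b c d e f
      simp [hσL, hσR, httt]
    refine TensorProduct.ext' fun x y => ?_
    have hΔT : Coalgebra.comul (R := B) (x ⊗ₜ[B] y) =
        ttt (Coalgebra.comul (R := B) x ⊗ₜ[B] Coalgebra.comul (R := B) y) := by
      rw [hcm]; simp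
    calc (TensorProduct.assoc B (M ⊗[B] N) (M ⊗[B] N) (M ⊗[B] N))
          ((Coalgebra.comul (R := B)).rTensor (M ⊗[B] N)
            (Coalgebra.comul (R := B) (x ⊗ₜ[B] y)))
        = σL (TensorProduct.map
            ((Coalgebra.comul (R := B) (A := M)).rTensor M)
            ((Coalgebra.comul (R := B) (A := N)).rTensor N)
            (Coalgebra.comul (R := B) x ⊗ₜ[B] Coalgebra.comul (R := B) y)) := by
          rw [hΔT]
          exact LinearMap.congr_fun C1 _
      _ = σL (((Coalgebra.comul (R := B) (A := M)).rTensor M (Coalgebra.comul x)) ⊗ₜ[B]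
            ((Coalgebra.comul (R := B) (A := N)).rTensor N (Coalgebra.comul y))) := by
          rw [TensorProduct.map_tmul]
      _ = σR (((Coalgebra.comul (R := B) (A := M)).lTensor M (Coalgebra.comul x)) ⊗ₜ[B]
            ((Coalgebra.comul (R := B) (A := N)).lTensor N (Coalgebra.comul y))) := by
          rw [C3]
          simp only [LinearMap.comp_apply, TensorProduct.map_tmul]
          rw [← Coalgebra.coassoc_apply, ← Coalgebra.coassoc_apply]
          rfl
      _ = (Coalgebra.comul (R := B)).lTensor (M ⊗[B] N)
            (Coalgebra.comul (R := B) (x ⊗ₜ[B] y)) := by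
          rw [hΔT]
          have h5 := LinearMap.congr_fun C2
            (Coalgebra.comul (R := B) x ⊗ₜ[B] Coalgebra.comul (R := B) y)
          simp only [LinearMap.comp_apply, TensorProduct.map_tmul] at h5
          exact h5.symm
  rTensor_counit_comp_comul := by
    set ttt := (TensorProduct.tensorTensorTensorComm B M M N N).toLinearMap with httt
    set ρ : (B ⊗[B] M) ⊗[B] (B ⊗[B] N) →ₗ[B] B ⊗[B] (M ⊗[B] N) :=
      (TensorProduct.map (LinearMap.mul' B B) LinearMap.id) ∘ₗ
        (TensorProduct.tensorTensorTensorComm B B M B N).toLinearMap with hρ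
    have C4 : (Coalgebra.counit (R := B) (A := M ⊗[B] N)).rTensor (M ⊗[B] N) ∘ₗ ttt =
        ρ ∘ₗ TensorProduct.map
          ((Coalgebra.counit (R := B) (A := M)).rTensor M)
          ((Coalgebra.counit (R := B) (A := N)).rTensor N) := by
      ext a b c d
      simp [httt, hρ, mul_comm]
    refine TensorProduct.ext' fun x y => ?_
    have hΔT : Coalgebra.comul (R := B) (x ⊗ₜ[B] y) =
        ttt (Coalgebra.comul (R := B) x ⊗ₜ[B] Coalgebra.comul (R := B) y) := by
      simp [httt, AlgebraTensorModule.tensorTensorTensorComm_eq]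
    calc (Coalgebra.counit (R := B)).rTensor (M ⊗[B] N) (Coalgebra.comul (x ⊗ₜ[B] y))
        = ρ (TensorProduct.map
            ((Coalgebra.counit (R := B) (A := M)).rTensor M)
            ((Coalgebra.counit (R := B) (A := N)).rTensor N)
            (Coalgebra.comul (R := B) x ⊗ₜ[B] Coalgebra.comul (R := B) y)) := by
          rw [hΔT]; exact LinearMap.congr_fun C4 _
      _ = ρ ((1 ⊗ₜ[B] x) ⊗ₜ[B] (1 ⊗ₜ[B] y)) := by
          rw [TensorProduct.map_tmul, Coalgebra.rTensor_counit_comul,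
            Coalgebra.rTensor_counit_comul]
      _ = (1 : B) ⊗ₜ[B] (x ⊗ₜ[B] y) := by simp [hρ]
  lTensor_counit_comp_comul := by
    set ttt := (TensorProduct.tensorTensorTensorComm B M M N N).toLinearMap with httt
    set ρ : (M ⊗[B] B) ⊗[B] (N ⊗[B] B) →ₗ[B] (M ⊗[B] N) ⊗[B] B :=
      (TensorProduct.map LinearMap.id (LinearMap.mul' B B)) ∘ₗ
        (TensorProduct.tensorTensorTensorComm B M B N B).toLinearMap with hρ
    have C4 : (Coalgebra.counit (R := B) (A := M ⊗[B] N)).lTensor (M ⊗[B] N) ∘ₗ ttt =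
        ρ ∘ₗ TensorProduct.map
          ((Coalgebra.counit (R := B) (A := M)).lTensor M)
          ((Coalgebra.counit (R := B) (A := N)).lTensor N) := by
      ext a b c d
      simp [httt, hρ, mul_comm]
    refine TensorProduct.ext' fun x y => ?_
    have hΔT : Coalgebra.comul (R := B) (x ⊗ₜ[B] y) =
        ttt (Coalgebra.comul (R := B) x ⊗ₜ[B] Coalgebra.comul (R := B) y) := by
      simp [httt, AlgebraTensorModule.tensorTensorTensorComm_eq]
    calc (Coalgebra.counit (R := B)).lTensor (M ⊗[B] N) (Coalgebra.comul (x ⊗ₜ[B] y))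
        = ρ (TensorProduct.map
            ((Coalgebra.counit (R := B) (A := M)).lTensor M)
            ((Coalgebra.counit (R := B) (A := N)).lTensor N)
            (Coalgebra.comul (R := B) x ⊗ₜ[B] Coalgebra.comul (R := B) y)) := by
          rw [hΔT]; exact LinearMap.congr_fun C4 _
      _ = ρ ((x ⊗ₜ[B] (1 : B)) ⊗ₜ[B] (y ⊗ₜ[B] (1 : B))) := by
          rw [TensorProduct.map_tmul, Coalgebra.lTensor_counit_comul,
            Coalgebra.lTensor_counit_comul]
      _ = (x ⊗ₜ[B] y) ⊗ₜ[B] (1 : B) := by simp [hρ]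

end TensorCoalg
section Antipode

open HopfAlgebra

variable {B : Type*} [CommRing B]
variable {H : Type*} [CommRing H] [HopfAlgebra B H]

local notation "Δ" => Coalgebra.comul
local notation "ε" => Coalgebra.counit
local notation "S" => HopfAlgebra.antipode B
local notation "M" => LinearMap.mul' B H

theorem antipode_one' : (S : H →ₗ[B] H) 1 = 1 := by
  have h := HopfAlgebra.mul_antipode_rTensor_comul_apply (R := B) (A := H) 1
  rw [show (Coalgebra.comul (R := B) (1 : H)) = (1 : H) ⊗ₜ[B] (1 : H) by
    rw [Bialgebra.comul_one, Algebra.TensorProduct.one_def]] at h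
  simpa using h

theorem antipode_mul' (x y : H) :
    (S : H →ₗ[B] H) (x * y) = (S : H →ₗ[B] H) x * (S : H →ₗ[B] H) y := by
  letI : Coalgebra B (H ⊗[B] H) := tensorCoalgebra
  set ttt := (TensorProduct.tensorTensorTensorComm B H H H H).toLinearMap with httt
  have hcm : (Coalgebra.comul (R := B) (A := H ⊗[B] H)) =
      ttt ∘ₗ TensorProduct.map (Δ : H →ₗ[B] H ⊗[B] H) (Δ : H →ₗ[B] H ⊗[B] H) := rfl
  have hcu : (Coalgebra.counit (R := B) (A := H ⊗[B] H)) =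
      LinearMap.mul' B B ∘ₗ TensorProduct.map (ε : H →ₗ[B] B) (ε : H →ₗ[B] B) :=
    TensorProduct.ext' fun x y => by simp [mul_comm]
  set F : H ⊗[B] H →ₗ[B] H := (S : H →ₗ[B] H) ∘ₗ M with hF
  set G : H ⊗[B] H →ₗ[B] H :=
    M ∘ₗ TensorProduct.map (S : H →ₗ[B] H) (S : H →ₗ[B] H) with hG
  -- `mul'` is a coalgebra morphism `H ⊗ H → H`:
  have K0 : TensorProduct.map M M ∘ₗ ttt = LinearMap.mul' B (H ⊗[B] H) := by
    ext a b c d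
    simp [httt, Algebra.TensorProduct.tmul_mul_tmul]
  have claim1 : lconv F M = (lone : H ⊗[B] H →ₗ[B] H) := by
    refine TensorProduct.ext' fun a b => ?_
    have e1 : (TensorProduct.map F M) = (S : H →ₗ[B] H).rTensor H ∘ₗ
        TensorProduct.map M M := by
      ext u v w t
      simp [hF]
    have h1 : (TensorProduct.map M M) (Coalgebra.comul (R := B) (a ⊗ₜ[B] b)) =
        Δ (a * b) := by
      have h2 : Coalgebra.comul (R := B) (a ⊗ₜ[B] b) = ttt (Δ a ⊗ₜ[B] Δ b) := by
        rw [hcm]; simp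
      rw [h2, ← LinearMap.comp_apply, K0]
      have : (LinearMap.mul' B (H ⊗[B] H)) (Δ a ⊗ₜ[B] Δ b) = Δ a * Δ b := rfl
      rw [this, Bialgebra.comul_mul]
    rw [lconv_apply, LinearMap.congr_fun e1 _]
    rw [LinearMap.comp_apply, h1]
    rw [HopfAlgebra.mul_antipode_rTensor_comul_apply]
    rw [lone_apply, hcu]
    simp [Bialgebra.counit_mul]
  have claim2 : lconv M G = (lone : H ⊗[B] H →ₗ[B] H) := by
    refine TensorProduct.ext' fun a b => ?_
    set W : H ⊗[B] H →ₗ[B] H := M ∘ₗ (S : H →ₗ[B] H).lTensor H with hW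
    have e3 : M ∘ₗ TensorProduct.map M G ∘ₗ ttt =
        M ∘ₗ TensorProduct.map W W := by
      ext u v w t
      simp [httt, hG, hW, hF]
      ring
    have h2 : Coalgebra.comul (R := B) (a ⊗ₜ[B] b) = ttt (Δ a ⊗ₜ[B] Δ b) := by
      rw [hcm]; simp
    rw [lconv_apply, h2]
    have h3 := LinearMap.congr_fun e3 (Δ a ⊗ₜ[B] Δ b)
    simp only [LinearMap.comp_apply] at h3
    rw [h3]
    simp only [TensorProduct.map_tmul]
    have hWa : W (Δ a) = algebraMap B H (ε a) :=
      HopfAlgebra.mul_antipode_lTensor_comul_apply a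
    have hWb : W (Δ b) = algebraMap B H (ε b) :=
      HopfAlgebra.mul_antipode_lTensor_comul_apply b
    rw [LinearMap.mul'_apply, hWa, hWb, ← map_mul]
    rw [lone_apply, hcu]
    simp [Bialgebra.counit_mul]
  have main : F = G := by
    calc F = lconv F lone := (lconv_lone F).symm
      _ = lconv F (lconv M G) := by rw [claim2]
      _ = lconv (lconv F M) G := (lconv_assoc F M G).symm
      _ = lconv lone G := by rw [claim1]
      _ = G := lone_lconv G
  have := LinearMap.congr_fun main (x ⊗ₜ[B] y)
  simpa [hF, hG] using this

/-- The antipode of a commutative Hopf algebra, as an algebra homomorphism. -/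
noncomputable def antipodeAlgHom : H →ₐ[B] H :=
  AlgHom.ofLinearMap (S : H →ₗ[B] H) antipode_one' antipode_mul'

end Antipode
section Points

variable {B : Type*} [CommRing B]
variable {H : Type*} [CommRing H] [HopfAlgebra B H]
variable {C : Type*} [CommRing C] [Algebra B C]

/-- Convolution of algebra-homomorphism points of a Hopf algebra. -/
noncomputable def pconv (φ ψ : H →ₐ[B] C) : H →ₐ[B] C :=
  (Algebra.TensorProduct.lift φ ψ fun x y => Commute.all _ _).comp (Bialgebra.comulAlgHom B H)

/-- The convolution-unit point. -/
noncomputable def pone : H →ₐ[B] C :=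
  (Algebra.ofId B C).comp (Bialgebra.counitAlgHom B H)

lemma pconv_toLinearMap (φ ψ : H →ₐ[B] C) :
    (pconv φ ψ).toLinearMap = lconv φ.toLinearMap ψ.toLinearMap := by
  have hl : (Algebra.TensorProduct.lift φ ψ fun x y => Commute.all _ _).toLinearMap =
      LinearMap.mul' B C ∘ₗ TensorProduct.map φ.toLinearMap ψ.toLinearMap := by
    refine TensorProduct.ext' fun x y => ?_
    simp [Algebra.TensorProduct.lift_tmul]
  ext a
  have := LinearMap.congr_fun hl (Coalgebra.comul a)
  simpa [pconv, lconv_apply] using this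

lemma pone_toLinearMap : (pone (B := B) (H := H) (C := C)).toLinearMap = lone := by
  ext a
  simp [pone, lone_apply, Algebra.ofId_apply]

lemma pconv_assoc (φ ψ χ : H →ₐ[B] C) :
    pconv (pconv φ ψ) χ = pconv φ (pconv ψ χ) := by
  apply AlgHom.toLinearMap_injective
  rw [pconv_toLinearMap, pconv_toLinearMap, pconv_toLinearMap, pconv_toLinearMap,
    lconv_assoc]

lemma pconv_pone (φ : H →ₐ[B] C) : pconv φ pone = φ := by
  apply AlgHom.toLinearMap_injective
  rw [pconv_toLinearMap, pone_toLinearMap, lconv_lone]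

lemma pone_pconv (φ : H →ₐ[B] C) : pconv pone φ = φ := by
  apply AlgHom.toLinearMap_injective
  rw [pconv_toLinearMap, pone_toLinearMap, lone_lconv]

lemma comp_pconv {C' : Type*} [CommRing C'] [Algebra B C'] (θ : C →ₐ[B] C')
    (φ ψ : H →ₐ[B] C) : θ.comp (pconv φ ψ) = pconv (θ.comp φ) (θ.comp ψ) := by
  apply AlgHom.toLinearMap_injective
  rw [AlgHom.comp_toLinearMap, pconv_toLinearMap, pconv_toLinearMap,
    AlgHom.comp_toLinearMap, AlgHom.comp_toLinearMap, algHom_comp_lconv]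

lemma comp_pone {C' : Type*} [CommRing C'] [Algebra B C'] (θ : C →ₐ[B] C') :
    θ.comp (pone (B := B) (H := H)) = pone := by
  apply AlgHom.toLinearMap_injective
  ext a
  simp [pone, Algebra.ofId_apply, AlgHom.commutes]

lemma pconv_antipode_right (ψ : H →ₐ[B] C) :
    pconv ψ (ψ.comp antipodeAlgHom) = pone := by
  apply AlgHom.toLinearMap_injective
  rw [pconv_toLinearMap, pone_toLinearMap]
  have hS : (ψ.comp (antipodeAlgHom (B := B))).toLinearMap =
      ψ.toLinearMap ∘ₗ (HopfAlgebra.antipode B : H →ₗ[B] H) := rfl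
  rw [hS]
  -- ∑ ψ a₁ * ψ (S a₂) = algebraMap (ε a)
  ext a
  rw [lconv_apply, lone_apply]
  have e : TensorProduct.map ψ.toLinearMap (ψ.toLinearMap ∘ₗ HopfAlgebra.antipode B) =
      TensorProduct.map ψ.toLinearMap ψ.toLinearMap ∘ₗ
        (HopfAlgebra.antipode (R := B) (A := H)).lTensor H := by
    ext x y; simp
  have e2 : LinearMap.mul' B C ∘ₗ TensorProduct.map ψ.toLinearMap ψ.toLinearMap =
      ψ.toLinearMap ∘ₗ LinearMap.mul' B H := by
    ext x y; simp
  have h4 := LinearMap.congr_fun e (Coalgebra.comul a)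
  simp only [LinearMap.comp_apply] at h4
  rw [h4]
  have h3 := LinearMap.congr_fun e2
    ((HopfAlgebra.antipode (R := B) (A := H)).lTensor H (Coalgebra.comul a))
  simp only [LinearMap.comp_apply] at h3
  rw [h3, HopfAlgebra.mul_antipode_lTensor_comul_apply, AlgHom.toLinearMap_apply,
    AlgHom.commutes]

lemma pconv_antipode_left (ψ : H →ₐ[B] C) :
    pconv (ψ.comp antipodeAlgHom) ψ = pone := by
  apply AlgHom.toLinearMap_injective
  rw [pconv_toLinearMap, pone_toLinearMap]
  have hS : (ψ.comp (antipodeAlgHom (B := B))).toLinearMap =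
      ψ.toLinearMap ∘ₗ (HopfAlgebra.antipode B : H →ₗ[B] H) := rfl
  rw [hS]
  ext a
  rw [lconv_apply, lone_apply]
  have e : TensorProduct.map (ψ.toLinearMap ∘ₗ HopfAlgebra.antipode B) ψ.toLinearMap =
      TensorProduct.map ψ.toLinearMap ψ.toLinearMap ∘ₗ
        (HopfAlgebra.antipode (R := B) (A := H)).rTensor H := by
    ext x y; simp
  have e2 : LinearMap.mul' B C ∘ₗ TensorProduct.map ψ.toLinearMap ψ.toLinearMap =
      ψ.toLinearMap ∘ₗ LinearMap.mul' B H := by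
    ext x y; simp
  have h4 := LinearMap.congr_fun e (Coalgebra.comul a)
  simp only [LinearMap.comp_apply] at h4
  rw [h4]
  have h3 := LinearMap.congr_fun e2
    ((HopfAlgebra.antipode (R := B) (A := H)).rTensor H (Coalgebra.comul a))
  simp only [LinearMap.comp_apply] at h3
  rw [h3, HopfAlgebra.mul_antipode_rTensor_comul_apply, AlgHom.toLinearMap_apply,
    AlgHom.commutes]

end Points

end
section Localization

open Polynomial

variable (B : Type*) [CommRing B]

lemma ev0_algebraMap' (P : Polynomial B) :
    ev0 B (algebraMap (Polynomial B) (RLoc B) P) = Polynomial.eval 0 P := by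
  rw [ev0, IsLocalization.liftAlgHom_apply, IsLocalization.lift_eq]
  simp [Polynomial.coe_aeval_eq_eval]

lemma ev1_algebraMap' (P : Polynomial B) :
    ev1 B (algebraMap (Polynomial B) (RLoc B) P) = Polynomial.eval 1 P := by
  rw [ev1, IsLocalization.liftAlgHom_apply, IsLocalization.lift_eq]
  simp [Polynomial.coe_aeval_eq_eval]

lemma isUnit_of_isUnit_ev (x : RLoc B) (h0 : IsUnit (ev0 B x)) (h1 : IsUnit (ev1 B x)) :
    IsUnit x := by
  obtain ⟨⟨P, s⟩, rfl⟩ := IsLocalization.mk'_surjective (RSigma B) x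
  have hspec := IsLocalization.mk'_spec (RLoc B) P s
  have hs := mem_RSigma.mp s.2
  have hP0 : IsUnit (Polynomial.eval 0 P) := by
    have h := congrArg (ev0 B) hspec
    rw [map_mul, ev0_algebraMap', ev0_algebraMap'] at h
    exact h ▸ h0.mul hs.1
  have hP1 : IsUnit (Polynomial.eval 1 P) := by
    have h := congrArg (ev1 B) hspec
    rw [map_mul, ev1_algebraMap', ev1_algebraMap'] at h
    exact h ▸ h1.mul hs.2
  have hP : IsUnit (algebraMap (Polynomial B) (RLoc B) P) :=
    IsLocalization.map_units (RLoc B) (⟨P, mem_RSigma.mpr ⟨hP0, hP1⟩⟩ : RSigma B)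
  rw [← hspec] at hP
  exact isUnit_of_mul_isUnit_left hP

/-- The polynomial substitution `t ↦ 1 - t`. -/
noncomputable def revPoly : Polynomial B →ₐ[B] Polynomial B :=
  Polynomial.aeval (1 - Polynomial.X)

lemma revPoly_eval (P : Polynomial B) (a : B) :
    Polynomial.eval a (revPoly B P) = Polynomial.eval (1 - a) P := by
  rw [revPoly, ← Polynomial.comp_eq_aeval, Polynomial.eval_comp]
  simp

lemma revPoly_mem (P : Polynomial B) (hP : P ∈ RSigma B) : revPoly B P ∈ RSigma B := by
  have h := mem_RSigma.mp hP
  refine mem_RSigma.mpr ⟨?_, ?_⟩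
  · rw [revPoly_eval]; simpa using h.2
  · rw [revPoly_eval]; simpa using h.1

/-- The involution of `B[t]_Σ` induced by `t ↦ 1 - t`. -/
noncomputable def revLoc : RLoc B →ₐ[B] RLoc B :=
  IsLocalization.liftAlgHom (M := RSigma B)
    (f := (IsScalarTower.toAlgHom B (Polynomial B) (RLoc B)).comp (revPoly B))
    (fun y => by
      simpa using IsLocalization.map_units (RLoc B)
        (⟨revPoly B y, revPoly_mem B y y.2⟩ : RSigma B))

lemma revLoc_algebraMap (P : Polynomial B) :
    revLoc B (algebraMap (Polynomial B) (RLoc B) P) =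
      algebraMap (Polynomial B) (RLoc B) (revPoly B P) := by
  rw [revLoc, IsLocalization.liftAlgHom_apply, IsLocalization.lift_eq]
  rfl

lemma ev0_comp_revLoc : (ev0 B).comp (revLoc B) = ev1 B := by
  have h : ((ev0 B).comp (revLoc B)).toRingHom = (ev1 B).toRingHom := by
    apply IsLocalization.ringHom_ext (RSigma B)
    refine RingHom.ext fun P => ?_
    simp only [RingHom.comp_apply, AlgHom.toRingHom_eq_coe, RingHom.coe_coe, AlgHom.comp_apply]
    rw [revLoc_algebraMap, ev0_algebraMap', ev1_algebraMap', revPoly_eval]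
    norm_num
  exact AlgHom.ext fun x => RingHom.congr_fun h x

lemma ev1_comp_revLoc : (ev1 B).comp (revLoc B) = ev0 B := by
  have h : ((ev1 B).comp (revLoc B)).toRingHom = (ev0 B).toRingHom := by
    apply IsLocalization.ringHom_ext (RSigma B)
    refine RingHom.ext fun P => ?_
    simp only [RingHom.comp_apply, AlgHom.toRingHom_eq_coe, RingHom.coe_coe, AlgHom.comp_apply]
    rw [revLoc_algebraMap, ev1_algebraMap', ev0_algebraMap', revPoly_eval]
    norm_num
  exact AlgHom.ext fun x => RingHom.congr_fun h x

variable {H : Type*} [CommRing H] [Algebra B H]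

/-- The constant path at a point. -/
noncomputable def cstPath (ψ : H →ₐ[B] B) : H →ₐ[B] RLoc B :=
  (IsScalarTower.toAlgHom B B (RLoc B)).comp ψ

lemma ev0_comp_cstPath (ψ : H →ₐ[B] B) : (ev0 B).comp (cstPath B ψ) = ψ := by
  rw [cstPath, ← AlgHom.comp_assoc,
    Subsingleton.elim ((ev0 B).comp (IsScalarTower.toAlgHom B B (RLoc B))) (AlgHom.id B B),
    AlgHom.id_comp]

lemma ev1_comp_cstPath (ψ : H →ₐ[B] B) : (ev1 B).comp (cstPath B ψ) = ψ := by
  rw [cstPath, ← AlgHom.comp_assoc,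
    Subsingleton.elim ((ev1 B).comp (IsScalarTower.toAlgHom B B (RLoc B))) (AlgHom.id B B),
    AlgHom.id_comp]

end Localization

section Main

variable (B : Type*) [CommRing B] (H : Type*) [CommRing H] [HopfAlgebra B H]

theorem directlyREquiv_equivalence : Equivalence (DirectlyREquivPoints B H) where
  refl ψ := ⟨cstPath B ψ, ev0_comp_cstPath B ψ, ev1_comp_cstPath B ψ⟩
  symm := by
    rintro ψ₀ ψ₁ ⟨χ, h0, h1⟩
    exact ⟨(revLoc B).comp χ, by rw [← AlgHom.comp_assoc, ev0_comp_revLoc, h1],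
      by rw [← AlgHom.comp_assoc, ev1_comp_revLoc, h0]⟩
  trans := by
    rintro ψ₀ ψ₁ ψ₂ ⟨χ, h0, h1⟩ ⟨χ', h0', h1'⟩
    refine ⟨pconv (pconv χ (cstPath B (ψ₁.comp antipodeAlgHom))) χ', ?_, ?_⟩
    · rw [comp_pconv, comp_pconv, h0, h0', ev0_comp_cstPath, pconv_assoc,
        pconv_antipode_left, pconv_pone]
    · rw [comp_pconv, comp_pconv, h1, h1', ev1_comp_cstPath, pconv_antipode_right,
        pone_pconv]

end Main

theorem R_equiv_in_G_implies_directly_R_equiv_in_principal_open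
    (B : Type*) [CommRing B] (H : Type*) [CommRing H] [HopfAlgebra B H] (f : H)
    (φ₀ φ₁ : H →ₐ[B] B) (h₀ : IsUnit (φ₀ f)) (h₁ : IsUnit (φ₁ f))
    (h : Relation.EqvGen (DirectlyREquivPoints B H) φ₀ φ₁) :
    ∃ φ : H →ₐ[B] RLoc B,
      IsUnit (φ f) ∧ (ev0 B).comp φ = φ₀ ∧ (ev1 B).comp φ = φ₁ := by
  obtain ⟨φ, h0, h1⟩ := ((directlyREquiv_equivalence B H).eqvGen_iff).mp h
  refine ⟨φ, ?_, h0, h1⟩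
  refine isUnit_of_isUnit_ev B (φ f) ?_ ?_
  · rw [show ev0 B (φ f) = ((ev0 B).comp φ) f from rfl, h0]; exact h₀
  · rw [show ev1 B (φ f) = ((ev1 B).comp φ) f from rfl, h1]; exact h₁
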